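/- Let Σ̂ ∈ ℝ^{m×m} be symmetric positive definite and let E ⊆ {1,…,m} × {1,…,m} be a set of index pairs containing all diagonal pairs (i,i). Then the function ℓ(Γ) = Σ_{i=1}^m −2·log(Γ_{ii}) + tr(Γ Γᵀ Σ̂) attains its minimum on the set S_E := {Γ ∈ ℝ^{m×m} : Γ_{ij} = 0 for all (i,j) ∉ E, and Γ_{ii} > 0 for all i}, and the minimizer is unique. -/

import Mathlib

open Matrix Real

attribute [local instance] Matrix.normedAddCommGroup Matrix.normedSpace

private lemma stmt15_sum3_comm {m : ℕ} (G : Fin m → Fin m → Fin m → ℝ) :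
    ∑ a, ∑ c, ∑ b, G a c b = ∑ b, ∑ c, ∑ a, G a c b := by
  rw [Finset.sum_comm]
  rw [show (∑ c, ∑ a, ∑ b, G a c b) = ∑ c, ∑ b, ∑ a, G a c b from
    Finset.sum_congr rfl fun c _ => Finset.sum_comm]
  rw [Finset.sum_comm]

private lemma stmt15_trace_expand {m : ℕ} (Sig Γ : Matrix (Fin m) (Fin m) ℝ) :
    Matrix.trace (Γ * Γᵀ * Sig) =
      ∑ j, dotProduct (fun i => Γ i j) (Sig *ᵥ (fun i => Γ i j)) := by
  simp only [Matrix.trace, Matrix.diag, Matrix.mul_apply, dotProduct,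
    Matrix.mulVec, Matrix.transpose_apply, Finset.mul_sum, Finset.sum_mul]
  rw [stmt15_sum3_comm]
  exact Finset.sum_congr rfl fun b _ => Finset.sum_congr rfl fun c _ =>
    Finset.sum_congr rfl fun a _ => by ring

private lemma stmt15_Q_nonneg {m : ℕ} {Sig : Matrix (Fin m) (Fin m) ℝ} (hpd : Sig.PosDef)
    (Γ : Matrix (Fin m) (Fin m) ℝ) : 0 ≤ Matrix.trace (Γ * Γᵀ * Sig) := by
  rw [stmt15_trace_expand]
  refine Finset.sum_nonneg fun j _ => ?_
  have := hpd.posSemidef.dotProduct_mulVec_nonneg (fun i => Γ i j)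
  simpa using this

private lemma stmt15_Q_pos {m : ℕ} {Sig : Matrix (Fin m) (Fin m) ℝ} (hpd : Sig.PosDef)
    {Γ : Matrix (Fin m) (Fin m) ℝ} (hΓ : Γ ≠ 0) :
    0 < Matrix.trace (Γ * Γᵀ * Sig) := by
  rw [stmt15_trace_expand]
  obtain ⟨i, j, hij⟩ : ∃ i j, Γ i j ≠ 0 := by
    by_contra h
    push_neg at h
    exact hΓ (by ext i j; simp [h])
  have hcol : (fun i => Γ i j) ≠ 0 := fun h => hij (congrFun h i)
  have hjpos : 0 < dotProduct (fun i => Γ i j) (Sig *ᵥ fun i => Γ i j) := by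
    have := hpd.dotProduct_mulVec_pos hcol
    simpa using this
  refine Finset.sum_pos' (fun k _ => ?_) ⟨j, Finset.mem_univ j, hjpos⟩
  have := hpd.posSemidef.dotProduct_mulVec_nonneg (fun i => Γ i k)
  simpa using this

private lemma stmt15_trace_symm {m : ℕ} {Sig : Matrix (Fin m) (Fin m) ℝ} (hpd : Sig.PosDef)
    (A B : Matrix (Fin m) (Fin m) ℝ) :
    Matrix.trace (A * Bᵀ * Sig) = Matrix.trace (B * Aᵀ * Sig) := by
  have hs : Sigᵀ = Sig := by
    have := hpd.1.eq
    rwa [Matrix.conjTranspose_eq_transpose_of_trivial] at this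
  calc Matrix.trace (A * Bᵀ * Sig) = Matrix.trace ((A * Bᵀ * Sig)ᵀ) :=
        (Matrix.trace_transpose _).symm
    _ = Matrix.trace (Sigᵀ * (Bᵀᵀ * Aᵀ)) := by
        simp [Matrix.transpose_mul, Matrix.mul_assoc]
    _ = Matrix.trace (Sig * (B * Aᵀ)) := by rw [hs, Matrix.transpose_transpose]
    _ = Matrix.trace (B * Aᵀ * Sig) := by rw [← Matrix.trace_mul_comm, Matrix.mul_assoc]

private lemma stmt15_Q_add {m : ℕ} {Sig : Matrix (Fin m) (Fin m) ℝ} (hpd : Sig.PosDef)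
    (A B : Matrix (Fin m) (Fin m) ℝ) :
    Matrix.trace ((A + B) * (A + B)ᵀ * Sig) =
      Matrix.trace (A * Aᵀ * Sig) + Matrix.trace (B * Bᵀ * Sig)
      + 2 * Matrix.trace (A * Bᵀ * Sig) := by
  simp only [Matrix.transpose_add, Matrix.add_mul, Matrix.mul_add, Matrix.trace_add]
  rw [stmt15_trace_symm hpd B A]
  ring

private lemma stmt15_T_smul {m : ℕ} (Sig : Matrix (Fin m) (Fin m) ℝ) (a b : ℝ)
    (A B : Matrix (Fin m) (Fin m) ℝ) :
    Matrix.trace ((a • A) * (b • B)ᵀ * Sig) = (a * b) * Matrix.trace (A * Bᵀ * Sig) := by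
  simp only [Matrix.transpose_smul, Matrix.smul_mul, Matrix.mul_smul, Matrix.trace_smul,
    smul_eq_mul]
  ring

private lemma stmt15_Q_cont {m : ℕ} (Sig : Matrix (Fin m) (Fin m) ℝ) :
    Continuous (fun Γ : Matrix (Fin m) (Fin m) ℝ => Matrix.trace (Γ * Γᵀ * Sig)) :=
  ((continuous_id.matrix_mul continuous_id.matrix_transpose).matrix_mul
    continuous_const).matrix_trace

private lemma stmt15_Q_lb {m : ℕ} (hm : 0 < m) {Sig : Matrix (Fin m) (Fin m) ℝ}
    (hpd : Sig.PosDef) :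
    ∃ c > 0, ∀ Γ : Matrix (Fin m) (Fin m) ℝ,
      c * ‖Γ‖ ^ 2 ≤ Matrix.trace (Γ * Γᵀ * Sig) := by
  haveI : Nonempty (Fin m) := ⟨⟨0, hm⟩⟩
  haveI : Nontrivial (Matrix (Fin m) (Fin m) ℝ) := by
    refine ⟨1, 0, fun h => ?_⟩
    have := congrFun (congrFun h ⟨0, hm⟩) ⟨0, hm⟩
    simp [Matrix.one_apply] at this
  have hS : IsCompact (Metric.sphere (0 : Matrix (Fin m) (Fin m) ℝ) 1) :=
    isCompact_sphere 0 1
  have hne : (Metric.sphere (0 : Matrix (Fin m) (Fin m) ℝ) 1).Nonempty :=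
    NormedSpace.sphere_nonempty.mpr zero_le_one
  obtain ⟨u, huS, humin⟩ := hS.exists_isMinOn hne (stmt15_Q_cont Sig).continuousOn
  have hu1 : ‖u‖ = 1 := by simpa using huS
  have hu0 : u ≠ 0 := by intro h; rw [h] at hu1; simp at hu1
  refine ⟨Matrix.trace (u * uᵀ * Sig), stmt15_Q_pos hpd hu0, fun Γ => ?_⟩
  rcases eq_or_ne Γ 0 with rfl | hΓ
  · simp
  · have hnpos : (0:ℝ) < ‖Γ‖ := norm_pos_iff.mpr hΓ
    have hmem : (‖Γ‖⁻¹ • Γ) ∈ Metric.sphere (0 : Matrix (Fin m) (Fin m) ℝ) 1 := by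
      simp [norm_smul, abs_of_pos (inv_pos.mpr hnpos), inv_mul_cancel₀ hnpos.ne']
    have hle := isMinOn_iff.mp humin _ hmem
    have hsm : Matrix.trace ((‖Γ‖⁻¹ • Γ) * (‖Γ‖⁻¹ • Γ)ᵀ * Sig)
        = (‖Γ‖⁻¹) ^ 2 * Matrix.trace (Γ * Γᵀ * Sig) := by
      simpa using stmt15_T_smul Sig (‖Γ‖⁻¹) (‖Γ‖⁻¹) Γ Γ |>.trans (by ring)
    rw [hsm] at hle
    have h2 : ‖Γ‖ ^ 2 * Matrix.trace (u * uᵀ * Sig)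
        ≤ ‖Γ‖ ^ 2 * ((‖Γ‖⁻¹) ^ 2 * Matrix.trace (Γ * Γᵀ * Sig)) :=
      mul_le_mul_of_nonneg_left hle (by positivity)
    have h3 : ‖Γ‖ ^ 2 * ((‖Γ‖⁻¹) ^ 2 * Matrix.trace (Γ * Γᵀ * Sig))
        = Matrix.trace (Γ * Γᵀ * Sig) := by
      field_simp
    rw [h3] at h2
    linarith

open Matrix in
/-- Existence and uniqueness of the support-constrained maximum likelihood
estimator: for symmetric positive definite `Σ̂` and a support set `E` containing
the diagonal, `ℓ(Γ) = ∑ᵢ -2 log Γᵢᵢ + tr(Γ Γᵀ Σ̂)` attains its minimum on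
`S_E = {Γ : Γᵢⱼ = 0 for (i,j) ∉ E, Γᵢᵢ > 0}`, and the minimizer is unique. -/
theorem stmt_15 {m : ℕ} (Sig : Matrix (Fin m) (Fin m) ℝ) (hpd : Sig.PosDef)
    (E : Set (Fin m × Fin m)) (hE : ∀ i : Fin m, (i, i) ∈ E)
    (ℓ : Matrix (Fin m) (Fin m) ℝ → ℝ)
    (hℓ : ∀ Γ, ℓ Γ = (∑ i, -2 * Real.log (Γ i i)) + Matrix.trace (Γ * Γᵀ * Sig)) :
    ∃ Γ₀ : Matrix (Fin m) (Fin m) ℝ,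
      ((∀ i j : Fin m, (i, j) ∉ E → Γ₀ i j = 0) ∧ (∀ i, 0 < Γ₀ i i)) ∧
      (∀ Γ : Matrix (Fin m) (Fin m) ℝ,
        (∀ i j : Fin m, (i, j) ∉ E → Γ i j = 0) → (∀ i, 0 < Γ i i) →
        ℓ Γ₀ ≤ ℓ Γ) ∧
      (∀ Γ₁ : Matrix (Fin m) (Fin m) ℝ,
        (∀ i j : Fin m, (i, j) ∉ E → Γ₁ i j = 0) → (∀ i, 0 < Γ₁ i i) →
        (∀ Γ : Matrix (Fin m) (Fin m) ℝ,
          (∀ i j : Fin m, (i, j) ∉ E → Γ i j = 0) → (∀ i, 0 < Γ i i) →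
          ℓ Γ₁ ≤ ℓ Γ) →
        Γ₁ = Γ₀) := by
  rcases Nat.eq_zero_or_pos m with hm | hm
  · -- trivial case m = 0
    subst hm
    haveI : Subsingleton (Matrix (Fin 0) (Fin 0) ℝ) :=
      ⟨fun a b => by ext i j; exact Fin.elim0 i⟩
    refine ⟨1, ⟨fun i j _ => Fin.elim0 i, fun i => Fin.elim0 i⟩, ?_, ?_⟩
    · intro Γ _ _
      rw [Subsingleton.elim Γ 1]
    · intro Γ₁ _ _ _
      exact Subsingleton.elim _ _
  -- main case
  obtain ⟨c, hc, hQlb⟩ := stmt15_Q_lb hm hpd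
  set B : ℝ := ℓ 1 with hB
  have hone_supp : ∀ i j, (i, j) ∉ E → (1 : Matrix (Fin m) (Fin m) ℝ) i j = 0 := by
    intro i j hij
    have hne : i ≠ j := fun h => hij (h ▸ hE i)
    exact Matrix.one_apply_ne hne
  have hone_diag : ∀ i, (0:ℝ) < (1 : Matrix (Fin m) (Fin m) ℝ) i i := by
    intro i; simp [Matrix.one_apply]
  set R : ℝ := max ((2 * m + |B| + 1) / c + 1) ‖(1 : Matrix (Fin m) (Fin m) ℝ)‖ with hR
  set ε : ℝ := min (Real.exp (-(B + m ^ 2 / c) / 2)) 1 with hε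
  have hε0 : 0 < ε := lt_min (Real.exp_pos _) one_pos
  -- entrywise bound
  have hentry : ∀ (Γ : Matrix (Fin m) (Fin m) ℝ) i, Γ i i ≤ ‖Γ‖ := fun Γ i =>
    (le_abs_self _).trans (Matrix.norm_entry_le_entrywise_sup_norm Γ)
  -- per-term log bound
  have hterm : ∀ (Γ : Matrix (Fin m) (Fin m) ℝ) i, 0 < Γ i i →
      -2 * ‖Γ‖ ≤ -2 * Real.log (Γ i i) := by
    intro Γ i hpos
    have h1 : Real.log (Γ i i) ≤ Γ i i - 1 := Real.log_le_sub_one_of_pos hpos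
    have h2 := hentry Γ i
    nlinarith
  -- full-sum log bound
  have hsum_lb : ∀ Γ : Matrix (Fin m) (Fin m) ℝ, (∀ i, 0 < Γ i i) →
      -2 * m * ‖Γ‖ ≤ ∑ i, -2 * Real.log (Γ i i) := by
    intro Γ hd
    calc -2 * m * ‖Γ‖ = ∑ _i : Fin m, -2 * ‖Γ‖ := by
          simp [Finset.sum_const, Finset.card_univ]; ring
      _ ≤ ∑ i, -2 * Real.log (Γ i i) :=
          Finset.sum_le_sum fun i _ => hterm Γ i (hd i)
  -- log bound isolating one term
  have hsum_lb2 : ∀ Γ : Matrix (Fin m) (Fin m) ℝ, (∀ i, 0 < Γ i i) → ∀ i,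
      -2 * Real.log (Γ i i) - 2 * m * ‖Γ‖ ≤ ∑ k, -2 * Real.log (Γ k k) := by
    intro Γ hd i
    rw [← Finset.sum_erase_add _ _ (Finset.mem_univ i)]
    have h1 : -2 * m * ‖Γ‖ ≤ ∑ k ∈ Finset.univ.erase i, -2 * Real.log (Γ k k) := by
      calc -2 * m * ‖Γ‖ ≤ -2 * (Finset.univ.erase i).card * ‖Γ‖ := by
            have hcard : ((Finset.univ.erase i).card : ℝ) ≤ m := by
              have := Finset.card_erase_le (s := (Finset.univ : Finset (Fin m))) (a := i)
              calc ((Finset.univ.erase i).card : ℝ) ≤ (Finset.univ : Finset (Fin m)).card := by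
                    exact_mod_cast this
                _ = m := by simp
            nlinarith [norm_nonneg Γ]
        _ = ∑ _k ∈ Finset.univ.erase i, -2 * ‖Γ‖ := by
            rw [Finset.sum_const]; push_cast; ring
        _ ≤ ∑ k ∈ Finset.univ.erase i, -2 * Real.log (Γ k k) :=
            Finset.sum_le_sum fun k _ => hterm Γ k (hd k)
    linarith
  -- coercivity bounds on ℓ
  have hlb1 : ∀ Γ : Matrix (Fin m) (Fin m) ℝ, (∀ i, 0 < Γ i i) →
      c * ‖Γ‖ ^ 2 - 2 * m * ‖Γ‖ ≤ ℓ Γ := by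
    intro Γ hd
    rw [hℓ]
    have := hsum_lb Γ hd
    have := hQlb Γ
    linarith
  have hlb2 : ∀ Γ : Matrix (Fin m) (Fin m) ℝ, (∀ i, 0 < Γ i i) → ∀ i,
      -2 * Real.log (Γ i i) + c * ‖Γ‖ ^ 2 - 2 * m * ‖Γ‖ ≤ ℓ Γ := by
    intro Γ hd i
    rw [hℓ]
    have := hsum_lb2 Γ hd i
    have := hQlb Γ
    linarith
  -- sublevel sets are norm-bounded
  have hball : ∀ Γ : Matrix (Fin m) (Fin m) ℝ, (∀ i, 0 < Γ i i) → ℓ Γ ≤ B → ‖Γ‖ ≤ R := by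
    intro Γ hd hle
    by_contra hgt
    push_neg at hgt
    have hx1 : (2 * m + |B| + 1) / c + 1 < ‖Γ‖ := lt_of_le_of_lt (le_max_left _ _) hgt
    have hq : c * ‖Γ‖ ^ 2 - 2 * m * ‖Γ‖ ≤ B := le_trans (hlb1 Γ hd) hle
    have hx2 : (2 * m + |B| + 1) / c < ‖Γ‖ - 1 := by linarith
    have hx3 : 2 * m + |B| + 1 < c * (‖Γ‖ - 1) := by
      rw [div_lt_iff₀ hc] at hx2; linarith [mul_comm c (‖Γ‖ - 1)]
    have hx4 : (1:ℝ) < ‖Γ‖ := by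
      have : 0 ≤ (2 * m + |B| + 1) / c := by positivity
      linarith
    nlinarith [abs_nonneg B, le_abs_self B, mul_pos hc (lt_trans one_pos hx4)]
  -- sublevel sets have diagonal bounded below
  have hdiagball : ∀ Γ : Matrix (Fin m) (Fin m) ℝ, (∀ i, 0 < Γ i i) → ℓ Γ ≤ B →
      ∀ i, ε ≤ Γ i i := by
    intro Γ hd hle i
    have h1 : -2 * Real.log (Γ i i) + c * ‖Γ‖ ^ 2 - 2 * m * ‖Γ‖ ≤ B :=
      le_trans (hlb2 Γ hd i) hle
    have h2 : 0 ≤ c * ‖Γ‖ ^ 2 - 2 * m * ‖Γ‖ + (m:ℝ) ^ 2 / c := by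
      have h3 : 0 ≤ c * (‖Γ‖ - m / c) ^ 2 := by positivity
      have h4 : c * (‖Γ‖ - m / c) ^ 2 = c * ‖Γ‖ ^ 2 - 2 * m * ‖Γ‖ + m ^ 2 / c := by
        field_simp
        ring
      rw [h4] at h3
      exact h3
    have h5 : -(B + m ^ 2 / c) / 2 ≤ Real.log (Γ i i) := by linarith
    have h6 : Real.exp (-(B + m ^ 2 / c) / 2) ≤ Γ i i := by
      calc Real.exp (-(B + m ^ 2 / c) / 2) ≤ Real.exp (Real.log (Γ i i)) :=
            Real.exp_le_exp.mpr h5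
        _ = Γ i i := Real.exp_log (hd i)
    exact le_trans (min_le_left _ _) h6
  -- the compact set K
  set K : Set (Matrix (Fin m) (Fin m) ℝ) :=
    {Γ | (∀ i j, (i, j) ∉ E → Γ i j = 0) ∧ (∀ i, ε ≤ Γ i i) ∧ ‖Γ‖ ≤ R} with hK
  have h1K : (1 : Matrix (Fin m) (Fin m) ℝ) ∈ K := by
    refine ⟨hone_supp, fun i => ?_, le_max_right _ _⟩
    have : (1 : Matrix (Fin m) (Fin m) ℝ) i i = 1 := Matrix.one_apply_eq i
    rw [this]
    exact min_le_right _ _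
  have hKclosed : IsClosed K := by
    have hA : IsClosed {Γ : Matrix (Fin m) (Fin m) ℝ | ∀ i j, (i, j) ∉ E → Γ i j = 0} := by
      have heq : {Γ : Matrix (Fin m) (Fin m) ℝ | ∀ i j, (i, j) ∉ E → Γ i j = 0}
          = ⋂ i, ⋂ j, ⋂ (_ : (i, j) ∉ E), {Γ : Matrix (Fin m) (Fin m) ℝ | Γ i j = 0} := by
        ext Γ; simp
      rw [heq]
      exact isClosed_iInter fun i => isClosed_iInter fun j => isClosed_iInter fun _ =>
        isClosed_eq (continuous_id.matrix_elem i j) continuous_const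
    have hB' : IsClosed {Γ : Matrix (Fin m) (Fin m) ℝ | ∀ i, ε ≤ Γ i i} := by
      have heq : {Γ : Matrix (Fin m) (Fin m) ℝ | ∀ i, ε ≤ Γ i i}
          = ⋂ i, {Γ : Matrix (Fin m) (Fin m) ℝ | ε ≤ Γ i i} := by ext Γ; simp
      rw [heq]
      exact isClosed_iInter fun i =>
        isClosed_le continuous_const (continuous_id.matrix_elem i i)
    have hC : IsClosed {Γ : Matrix (Fin m) (Fin m) ℝ | ‖Γ‖ ≤ R} :=
      isClosed_le continuous_norm continuous_const
    have heqK : K = {Γ : Matrix (Fin m) (Fin m) ℝ | ∀ i j, (i, j) ∉ E → Γ i j = 0}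
        ∩ ({Γ | ∀ i, ε ≤ Γ i i} ∩ {Γ | ‖Γ‖ ≤ R}) := by
      ext Γ; simp only [hK, Set.mem_setOf_eq, Set.mem_inter_iff]
    rw [heqK]
    exact hA.inter (hB'.inter hC)
  have hKbdd : Bornology.IsBounded K := by
    refine (Metric.isBounded_closedBall (x := (0 : Matrix (Fin m) (Fin m) ℝ))
      (r := R)).subset fun Γ hΓ => ?_
    simpa [Metric.mem_closedBall, dist_zero_right] using hΓ.2.2
  have hKcpt : IsCompact K := Metric.isCompact_of_isClosed_isBounded hKclosed hKbdd
  have hKdiag : ∀ Γ ∈ K, ∀ i, 0 < Γ i i := fun Γ hΓ i => lt_of_lt_of_le hε0 (hΓ.2.1 i)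
  -- continuity of ℓ on K
  have hcontK : ContinuousOn ℓ K := by
    have hexpr : ContinuousOn (fun Γ : Matrix (Fin m) (Fin m) ℝ =>
        (∑ i, -2 * Real.log (Γ i i)) + Matrix.trace (Γ * Γᵀ * Sig)) K := by
      refine ContinuousOn.add ?_ (stmt15_Q_cont Sig).continuousOn
      refine continuousOn_finset_sum _ fun i _ => ?_
      refine ContinuousOn.mul continuousOn_const ?_
      refine ContinuousOn.log ((continuous_id.matrix_elem i i).continuousOn) ?_
      intro Γ hΓ
      exact (hKdiag Γ hΓ i).ne'
    exact hexpr.congr fun Γ _ => hℓ Γ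
  obtain ⟨Γ₀, hΓ₀K, hmin⟩ := hKcpt.exists_isMinOn ⟨1, h1K⟩ hcontK
  have hminle : ∀ Γ ∈ K, ℓ Γ₀ ≤ ℓ Γ := fun Γ h => isMinOn_iff.mp hmin Γ h
  have hΓ₀B : ℓ Γ₀ ≤ B := hminle 1 h1K
  have hΓ₀supp : ∀ i j, (i, j) ∉ E → Γ₀ i j = 0 := hΓ₀K.1
  have hΓ₀diag : ∀ i, 0 < Γ₀ i i := hKdiag Γ₀ hΓ₀K
  have hglobal : ∀ Γ : Matrix (Fin m) (Fin m) ℝ,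
      (∀ i j, (i, j) ∉ E → Γ i j = 0) → (∀ i, 0 < Γ i i) → ℓ Γ₀ ≤ ℓ Γ := by
    intro Γ hs hd
    by_cases hle : ℓ Γ ≤ B
    · exact hminle Γ ⟨hs, hdiagball Γ hd hle, hball Γ hd hle⟩
    · exact hΓ₀B.trans (le_of_not_ge hle)
  refine ⟨Γ₀, ⟨hΓ₀supp, hΓ₀diag⟩, hglobal, ?_⟩
  -- uniqueness
  intro Γ₁ hs1 hd1 hmin1
  by_contra hne
  have heq : ℓ Γ₁ = ℓ Γ₀ :=
    le_antisymm (hmin1 Γ₀ hΓ₀supp hΓ₀diag) (hglobal Γ₁ hs1 hd1)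
  set M : Matrix (Fin m) (Fin m) ℝ := (1/2 : ℝ) • (Γ₁ + Γ₀) with hM
  have hMapp : ∀ i j, M i j = (1/2 : ℝ) * (Γ₁ i j + Γ₀ i j) := by
    intro i j; simp [hM]; ring
  have hMs : ∀ i j, (i, j) ∉ E → M i j = 0 := by
    intro i j hij; rw [hMapp, hs1 i j hij, hΓ₀supp i j hij]; ring
  have hMd : ∀ i, 0 < M i i := by
    intro i; rw [hMapp]; have := hd1 i; have := hΓ₀diag i; linarith
  -- quadratic part: parallelogram
  set D : Matrix (Fin m) (Fin m) ℝ := (1/2 : ℝ) • (Γ₁ - Γ₀) with hD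
  have hDne : D ≠ 0 := by
    intro h
    apply hne
    have h2 : Γ₁ - Γ₀ = 0 := by
      have := congrArg (fun X => (2:ℝ) • X) h
      simpa [hD, smul_smul] using this
    exact sub_eq_zero.mp h2
  have hQD : 0 < Matrix.trace (D * Dᵀ * Sig) := stmt15_Q_pos hpd hDne
  have hpar : Matrix.trace (M * Mᵀ * Sig) + Matrix.trace (D * Dᵀ * Sig)
      = (1/2) * Matrix.trace (Γ₁ * Γ₁ᵀ * Sig) + (1/2) * Matrix.trace (Γ₀ * Γ₀ᵀ * Sig) := by
    have hM2 : M = (1/2 : ℝ) • Γ₁ + (1/2 : ℝ) • Γ₀ := by rw [hM, smul_add]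
    have hD2 : D = (1/2 : ℝ) • Γ₁ + (-(1/2) : ℝ) • Γ₀ := by
      rw [hD, smul_sub]; module
    rw [hM2, hD2, stmt15_Q_add hpd, stmt15_Q_add hpd]
    simp only [stmt15_T_smul]
    ring
  -- log part: concavity
  have hlog : ∀ i, -2 * Real.log (M i i)
      ≤ (1/2) * (-2 * Real.log (Γ₁ i i)) + (1/2) * (-2 * Real.log (Γ₀ i i)) := by
    intro i
    have hcc := strictConcaveOn_log_Ioi.concaveOn.2 (Set.mem_Ioi.mpr (hd1 i))
      (Set.mem_Ioi.mpr (hΓ₀diag i)) (by norm_num : (0:ℝ) ≤ 1/2)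
      (by norm_num : (0:ℝ) ≤ 1/2) (by norm_num)
    have : (1/2 : ℝ) * Real.log (Γ₁ i i) + (1/2 : ℝ) * Real.log (Γ₀ i i)
        ≤ Real.log (M i i) := by
      rw [hMapp]
      simpa [smul_eq_mul, mul_add] using hcc
    linarith
  have hsumlog : (∑ i, -2 * Real.log (M i i))
      ≤ (1/2) * (∑ i, -2 * Real.log (Γ₁ i i)) + (1/2) * (∑ i, -2 * Real.log (Γ₀ i i)) := by
    rw [Finset.mul_sum, Finset.mul_sum, ← Finset.sum_add_distrib]
    exact Finset.sum_le_sum fun i _ => hlog i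
  have hℓM : ℓ M < ℓ Γ₀ := by
    have e1 := hℓ M
    have e2 := hℓ Γ₁
    have e3 := hℓ Γ₀
    have : ℓ M ≤ (1/2) * ℓ Γ₁ + (1/2) * ℓ Γ₀ - Matrix.trace (D * Dᵀ * Sig) := by
      rw [e1, e2, e3]; linarith
    rw [heq] at this
    linarith
  exact absurd (hglobal M hMs hMd) (not_le.mpr hℓM)
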